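/- Let F_β : RC_β-sgMod → R_β-sgMod be the Morita equivalence M ↦ e†(β).M, where e†(β) = Σ_{ν : all π₂(ν_i)=0} e(ν). Then for M_i ∈ RC_{β_i}-sgMod there is a natural isomorphism F_{β₁+β₂}(M₁ ∘ M₂) ≅ F_{β₁}(M₁) ∘ F_{β₂}(M₂); that is, F = ⊕_β F_β is a monoidal functor. -/

import Mathlib

open TensorProduct

universe u v

section

variable {k : Type u} [Field k]

lemma corner_one_mul {A : Type v} [Ring A] {e x : A}
    (he : e * e = e) (hx : e * x * e = x) : e * x = x := by
  conv_lhs => rw [← hx]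
  calc e * (e * x * e) = e * e * x * e := by noncomm_ring
    _ = e * x * e := by rw [he]
    _ = x := hx

lemma corner_mul_one {A : Type v} [Ring A] {e x : A}
    (he : e * e = e) (hx : e * x * e = x) : x * e = x := by
  conv_lhs => rw [← hx]
  calc (e * x * e) * e = e * x * (e * e) := by noncomm_ring
    _ = e * x * e := by rw [he]
    _ = x := hx

/-- Left multiplication by `a`, as a `k`-linear map. -/
def lmulOp {A : Type v} [Ring A] [Algebra k A] (a : A) : A →ₗ[k] A where
  toFun y := a * y
  map_add' y z := mul_add a y z
  map_smul' c y := mul_smul_comm c a y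

/-- The corner `eAe` of a superalgebra at an even idempotent `e`, as a subspace. -/
def cornerSubmodule {A : Type v} [Ring A] [Algebra k A] (e : A) : Submodule k A where
  carrier := {x | e * x * e = x}
  add_mem' := by
    intro x y hx hy
    simp only [Set.mem_setOf_eq] at *
    simp only [mul_add, add_mul]
    rw [hx, hy]
  zero_mem' := by simp
  smul_mem' := by
    intro c x hx
    simp only [Set.mem_setOf_eq] at *
    rw [mul_smul_comm, smul_mul_assoc, hx]

/-- `e.M`, the `e`-fixed subspace of a module. -/
def eFix {B M : Type v} [Ring B] [AddCommGroup M] [Module k M] [Module B M]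
    [SMulCommClass k B M] (e : B) : Submodule k M where
  carrier := {m | e • m = m}
  add_mem' := by
    intro x y hx hy
    simp only [Set.mem_setOf_eq] at *
    rw [smul_add, hx, hy]
  zero_mem' := by simp
  smul_mem' := by
    intro c m hm
    simp only [Set.mem_setOf_eq] at *
    rw [← smul_comm c e m, hm]

variable {A1 A2 A : Type v} [Ring A1] [Ring A2] [Ring A]
  [Algebra k A1] [Algebra k A2] [Algebra k A]
variable (ι : A1 ⊗[k] A2 →ₗ[k] A)
variable (M1 M2 : Type v)
  [AddCommGroup M1] [Module k M1] [Module A1 M1] [SMulCommClass A1 k M1]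
  [SMulCommClass k A1 M1]
  [AddCommGroup M2] [Module k M2] [Module A2 M2] [SMulCommClass A2 k M2]
  [SMulCommClass k A2 M2]

/-- The relations defining the convolution product `M₁ ∘ M₂` as a quotient of
`A ⊗ₖ (M₁ ⊗ₖ M₂)`. -/
def convRel : Submodule k (A ⊗[k] (M1 ⊗[k] M2)) :=
  Submodule.span k
    {z | ∃ (a : A) (b1 : A1) (b2 : A2) (m1 : M1) (m2 : M2),
      z = (a * ι (b1 ⊗ₜ[k] b2)) ⊗ₜ[k] (m1 ⊗ₜ[k] m2)
        - a ⊗ₜ[k] ((b1 • m1) ⊗ₜ[k] (b2 • m2))}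

/-- The convolution product `M₁ ∘ M₂`. -/
abbrev ConvMod := (A ⊗[k] (M1 ⊗[k] M2)) ⧸ convRel (k := k) ι M1 M2

/-- The action of `a ∈ RC_{β₁+β₂}` on the convolution product. -/
noncomputable def convSmul (a : A) :
    ConvMod (k := k) ι M1 M2 →ₗ[k] ConvMod (k := k) ι M1 M2 :=
  Submodule.mapQ _ _ (TensorProduct.map (lmulOp (k := k) a) LinearMap.id)
    (by
      rw [convRel, Submodule.span_le]
      rintro _ ⟨a', b1, b2, m1, m2, rfl⟩
      simp only [SetLike.mem_coe, Submodule.mem_comap, map_sub,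
        TensorProduct.map_tmul, LinearMap.id_apply, lmulOp, LinearMap.coe_mk,
        AddHom.coe_mk]
      refine Submodule.subset_span ⟨a * a', b1, b2, m1, m2, ?_⟩
      rw [mul_assoc])

/-- The `e†(β₁+β₂)`-fixed part of `M₁ ∘ M₂`, i.e. `F_{β₁+β₂}(M₁ ∘ M₂)`. -/
def eConv (fA : A) : Submodule k (ConvMod (k := k) ι M1 M2) where
  carrier := {v | convSmul (k := k) ι M1 M2 fA v = v}
  add_mem' := by
    intro x y hx hy
    simp only [Set.mem_setOf_eq] at *
    rw [map_add, hx, hy]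
  zero_mem' := by simp
  smul_mem' := by
    intro c v hv
    simp only [Set.mem_setOf_eq] at *
    rw [map_smul, hv]

noncomputable local instance eFixTensorACG (f1 : A1) (f2 : A2) :
    AddCommGroup (↥(eFix (k := k) (M := M1) f1) ⊗[k] ↥(eFix (k := k) (M := M2) f2)) :=
  TensorProduct.addCommGroup

noncomputable local instance cornerTripleACG (f1 : A1) (f2 : A2) (fA : A) :
    AddCommGroup
      (↥(cornerSubmodule (k := k) fA) ⊗[k]
        (↥(eFix (k := k) (M := M1) f1) ⊗[k] ↥(eFix (k := k) (M := M2) f2))) :=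
  TensorProduct.addCommGroup

noncomputable local instance eFixTensorMod (f1 : A1) (f2 : A2) :
    Module k (↥(eFix (k := k) (M := M1) f1) ⊗[k] ↥(eFix (k := k) (M := M2) f2)) :=
  TensorProduct.leftModule

noncomputable local instance cornerTripleMod (f1 : A1) (f2 : A2) (fA : A) :
    Module k
      (↥(cornerSubmodule (k := k) fA) ⊗[k]
        (↥(eFix (k := k) (M := M1) f1) ⊗[k] ↥(eFix (k := k) (M := M2) f2))) :=
  TensorProduct.leftModule

/-- The relations defining the convolution product `F_{β₁}(M₁) ∘ F_{β₂}(M₂)` of the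
corner modules over the quiver Hecke algebra `R_{β₁+β₂} = e† RC_{β₁+β₂} e†`. -/
noncomputable def cornerConvRel (f1 : A1) (f2 : A2) (fA : A) :
    Submodule k
      (↥(cornerSubmodule (k := k) fA) ⊗[k]
        (↥(eFix (k := k) (M := M1) f1) ⊗[k] ↥(eFix (k := k) (M := M2) f2))) :=
  Submodule.span k
    {z | ∃ (r ru : ↥(cornerSubmodule (k := k) fA)) (c1 : A1) (c2 : A2),
      f1 * c1 * f1 = c1 ∧ f2 * c2 * f2 = c2 ∧
      ru.1 = r.1 * ι (c1 ⊗ₜ[k] c2) ∧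
      ∃ (m1 m1' : ↥(eFix (k := k) (M := M1) f1))
        (m2 m2' : ↥(eFix (k := k) (M := M2) f2)),
        m1'.1 = c1 • m1.1 ∧ m2'.1 = c2 • m2.1 ∧
        z = ru ⊗ₜ[k] (m1 ⊗ₜ[k] m2) - r ⊗ₜ[k] (m1' ⊗ₜ[k] m2')}

/-- The convolution product `F_{β₁}(M₁) ∘ F_{β₂}(M₂)`. -/
abbrev CornerConvMod (f1 : A1) (f2 : A2) (fA : A) :=
  (↥(cornerSubmodule (k := k) fA) ⊗[k]
      (↥(eFix (k := k) (M := M1) f1) ⊗[k] ↥(eFix (k := k) (M := M2) f2))) ⧸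
    cornerConvRel (k := k) ι M1 M2 f1 f2 fA

/-- Left multiplication by a corner element on the corner ring. -/
def cornerLmul (fA : A) (hfA : fA * fA = fA)
    (r0 : ↥(cornerSubmodule (k := k) fA)) :
    ↥(cornerSubmodule (k := k) fA) →ₗ[k] ↥(cornerSubmodule (k := k) fA) where
  toFun u :=
    ⟨r0.1 * u.1, by
      show fA * (r0.1 * u.1) * fA = r0.1 * u.1
      calc fA * (r0.1 * u.1) * fA = (fA * r0.1) * (u.1 * fA) := by noncomm_ring
        _ = r0.1 * u.1 := by
            rw [corner_one_mul hfA r0.2, corner_mul_one hfA u.2]⟩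
  map_add' u u' := Subtype.ext (mul_add r0.1 u.1 u'.1)
  map_smul' c u := Subtype.ext (mul_smul_comm c r0.1 u.1)

/-- The action of a corner element `r₀ ∈ R_{β₁+β₂}` on `F_{β₁}(M₁) ∘ F_{β₂}(M₂)`. -/
noncomputable def cornerConvSmul (f1 : A1) (f2 : A2) (fA : A) (hfA : fA * fA = fA)
    (r0 : ↥(cornerSubmodule (k := k) fA)) :
    CornerConvMod (k := k) ι M1 M2 f1 f2 fA →ₗ[k]
      CornerConvMod (k := k) ι M1 M2 f1 f2 fA :=
  Submodule.mapQ _ _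
    (TensorProduct.map (cornerLmul (k := k) fA hfA r0) LinearMap.id)
    (by
      rw [cornerConvRel, Submodule.span_le]
      rintro _ ⟨r, ru, c1, c2, hc1, hc2, hru, m1, m1', m2, m2', hm1, hm2, rfl⟩
      simp only [SetLike.mem_coe, Submodule.mem_comap, map_sub,
        TensorProduct.map_tmul, LinearMap.id_apply]
      refine Submodule.subset_span
        ⟨cornerLmul (k := k) fA hfA r0 r, cornerLmul (k := k) fA hfA r0 ru,
          c1, c2, hc1, hc2, ?_, m1, m1', m2, m2', hm1, hm2, rfl⟩
      show r0.1 * ru.1 = (r0.1 * r.1) * ι (c1 ⊗ₜ[k] c2)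
      rw [hru, mul_assoc])

section InnerAux
set_option linter.unusedSectionVars false

variable {ι M1 M2}

/-- Extract a finite "Peirce decomposition of 1" from fullness of an idempotent. -/
lemma full_decomp {B : Type v} [Ring B] [Algebra k B] {f : B}
    (h : Submodule.span k {x : B | ∃ a b : B, x = a * f * b} = ⊤) :
    ∃ (n : ℕ) (P Q : Fin n → B), ∑ i, P i * f * Q i = 1 := by
  have h1 : (1 : B) ∈ Submodule.span k {x : B | ∃ a b : B, x = a * f * b} := by
    rw [h]; trivial
  rw [Submodule.mem_span_set'] at h1
  obtain ⟨n, c, g, hsum⟩ := h1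
  choose a b hab using fun i => (g i).2
  refine ⟨n, fun i => c i • a i, fun i => b i, ?_⟩
  rw [← hsum]
  refine Finset.sum_congr rfl fun i _ => ?_
  rw [smul_mul_assoc, smul_mul_assoc, ← hab]

private lemma qmk_sum {V : Type v} [AddCommGroup V] [Module k V] {p : Submodule k V}
    {γ : Type} [Fintype γ] (f : γ → V) :
    (Submodule.Quotient.mk (∑ i, f i) : V ⧸ p) = ∑ i, Submodule.Quotient.mk (f i) :=
  map_sum p.mkQ f Finset.univ

private lemma ext3 {V W1 W2 N : Type v} [AddCommGroup V] [Module k V]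
    [AddCommGroup W1] [Module k W1] [AddCommGroup W2] [Module k W2]
    [AddCommGroup N] [Module k N]
    {F G : (V ⊗[k] (W1 ⊗[k] W2)) →ₗ[k] N}
    (h : ∀ a m n, F (a ⊗ₜ[k] (m ⊗ₜ[k] n)) = G (a ⊗ₜ[k] (m ⊗ₜ[k] n))) : F = G := by
  apply TensorProduct.ext'
  intro a y
  induction y using TensorProduct.induction_on with
  | zero => rw [TensorProduct.tmul_zero, map_zero, map_zero]
  | tmul m n => exact h a m n
  | add y1 y2 h1 h2 => rw [TensorProduct.tmul_add, map_add, map_add, h1, h2]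

/-- The defining relation of the convolution product, in the quotient. -/
lemma conv_mk (a : A) (b1 : A1) (b2 : A2) (m : M1) (n : M2) :
    (Submodule.Quotient.mk ((a * ι (b1 ⊗ₜ[k] b2)) ⊗ₜ[k] (m ⊗ₜ[k] n)) :
      ConvMod (k := k) ι M1 M2) =
    Submodule.Quotient.mk (a ⊗ₜ[k] ((b1 • m) ⊗ₜ[k] (b2 • n))) := by
  rw [Submodule.Quotient.eq]
  exact Submodule.subset_span ⟨a, b1, b2, m, n, rfl⟩

/-- All data needed for the Morita computation. -/
structure MData where
  f1 : A1
  f2 : A2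
  fA : A
  hι : ∀ x y : A1 ⊗[k] A2, ι (x * y) = ι x * ι y
  hf1 : f1 * f1 = f1
  hf2 : f2 * f2 = f2
  hfA : fA * fA = fA
  hg : ι (f1 ⊗ₜ[k] f2) * fA = ι (f1 ⊗ₜ[k] f2)
  n1 : ℕ
  n2 : ℕ
  P : Fin n1 → A1
  Q : Fin n1 → A1
  C : Fin n2 → A2
  D : Fin n2 → A2
  hs1 : ∑ i, P i * f1 * Q i = 1
  hs2 : ∑ j, C j * f2 * D j = 1

namespace MData

variable (S : MData (ι := ι))

lemma hf1' (x : A1) : S.f1 * (S.f1 * x) = S.f1 * x := by rw [← mul_assoc, S.hf1]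
lemma hf2' (x : A2) : S.f2 * (S.f2 * x) = S.f2 * x := by rw [← mul_assoc, S.hf2]
lemma mul_f1_f1 (x : A1) : x * S.f1 * S.f1 = x * S.f1 := by rw [mul_assoc, S.hf1]
lemma mul_f2_f2 (x : A2) : x * S.f2 * S.f2 = x * S.f2 := by rw [mul_assoc, S.hf2]

lemma corner_form1 (x : A1) :
    S.f1 * (S.f1 * x * S.f1) * S.f1 = S.f1 * x * S.f1 := by
  simp only [← mul_assoc, S.hf1, S.mul_f1_f1]
lemma corner_form2 (x : A2) :
    S.f2 * (S.f2 * x * S.f2) * S.f2 = S.f2 * x * S.f2 := by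
  simp only [← mul_assoc, S.hf2, S.mul_f2_f2]

lemma absorb (u : A1) (v : A2) :
    ι ((u * S.f1) ⊗ₜ[k] (v * S.f2)) * S.fA = ι ((u * S.f1) ⊗ₜ[k] (v * S.f2)) := by
  rw [show (u * S.f1) ⊗ₜ[k] (v * S.f2) = (u ⊗ₜ[k] v) * (S.f1 ⊗ₜ[k] S.f2) from
    (Algebra.TensorProduct.tmul_mul_tmul u S.f1 v S.f2).symm, S.hι, mul_assoc, S.hg]

/-- `a ↦ fA · a · ι((u f1) ⊗ (v f2))`, landing in the corner. -/
noncomputable def Xe (u : A1) (v : A2) : A →ₗ[k] ↥(cornerSubmodule (k := k) S.fA) where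
  toFun a := ⟨S.fA * a * ι ((u * S.f1) ⊗ₜ[k] (v * S.f2)), by
    show S.fA * (S.fA * a * ι ((u * S.f1) ⊗ₜ[k] (v * S.f2))) * S.fA = _
    have h1 : S.fA * (S.fA * a * ι ((u * S.f1) ⊗ₜ[k] (v * S.f2)))
        = S.fA * a * ι ((u * S.f1) ⊗ₜ[k] (v * S.f2)) := by
      rw [← mul_assoc, ← mul_assoc, S.hfA]
    rw [h1, mul_assoc, S.absorb]⟩
  map_add' a b := Subtype.ext (by simp [mul_add, add_mul])
  map_smul' c a := Subtype.ext (by simp [mul_smul_comm, smul_mul_assoc])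

lemma Xe_val (u : A1) (v : A2) (a : A) :
    (S.Xe u v a).1 = S.fA * a * ι ((u * S.f1) ⊗ₜ[k] (v * S.f2)) := rfl

/-- `m ↦ w • m`, landing in the `f1`-fixed part when `f1 w = w`. -/
def eF1 (w : A1) (hw : S.f1 * w = w) :
    M1 →ₗ[k] ↥(eFix (k := k) (M := M1) S.f1) where
  toFun m := ⟨w • m, by show S.f1 • (w • m) = w • m; rw [smul_smul, hw]⟩
  map_add' m m' := Subtype.ext (smul_add w m m')
  map_smul' c m := Subtype.ext (smul_comm w c m)

def eF2 (w : A2) (hw : S.f2 * w = w) :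
    M2 →ₗ[k] ↥(eFix (k := k) (M := M2) S.f2) where
  toFun m := ⟨w • m, by show S.f2 • (w • m) = w • m; rw [smul_smul, hw]⟩
  map_add' m m' := Subtype.ext (smul_add w m m')
  map_smul' c m := Subtype.ext (smul_comm w c m)

def U1 (q : A1) : M1 →ₗ[k] ↥(eFix (k := k) (M := M1) S.f1) :=
  S.eF1 (S.f1 * q) (S.hf1' q)
def U2 (q : A2) : M2 →ₗ[k] ↥(eFix (k := k) (M := M2) S.f2) :=
  S.eF2 (S.f2 * q) (S.hf2' q)

/-- Multiplying a corner element by `ι(c1 ⊗ c2)` with corner entries. -/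
noncomputable def cornerMul (r : ↥(cornerSubmodule (k := k) S.fA)) (c1 : A1) (c2 : A2)
    (hc1 : S.f1 * c1 * S.f1 = c1) (hc2 : S.f2 * c2 * S.f2 = c2) :
    ↥(cornerSubmodule (k := k) S.fA) :=
  ⟨r.1 * ι (c1 ⊗ₜ[k] c2), by
    show S.fA * (r.1 * ι (c1 ⊗ₜ[k] c2)) * S.fA = r.1 * ι (c1 ⊗ₜ[k] c2)
    have h1 : ι (c1 ⊗ₜ[k] c2) * S.fA = ι (c1 ⊗ₜ[k] c2) := by
      rw [← hc1, ← hc2]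
      exact S.absorb (S.f1 * c1) (S.f2 * c2)
    rw [← mul_assoc, corner_one_mul S.hfA r.2, mul_assoc, h1]⟩

lemma cornerMul_mk (r : ↥(cornerSubmodule (k := k) S.fA)) (c1 : A1) (c2 : A2)
    (hc1 : S.f1 * c1 * S.f1 = c1) (hc2 : S.f2 * c2 * S.f2 = c2)
    (m1 : ↥(eFix (k := k) (M := M1) S.f1)) (m2 : ↥(eFix (k := k) (M := M2) S.f2)) :
    (Submodule.Quotient.mk (S.cornerMul r c1 c2 hc1 hc2 ⊗ₜ[k] (m1 ⊗ₜ[k] m2)) :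
      CornerConvMod (k := k) ι M1 M2 S.f1 S.f2 S.fA) =
    Submodule.Quotient.mk (r ⊗ₜ[k]
      (S.eF1 c1 (corner_one_mul S.hf1 hc1) m1.1 ⊗ₜ[k]
       S.eF2 c2 (corner_one_mul S.hf2 hc2) m2.1)) := by
  rw [Submodule.Quotient.eq]
  exact Submodule.subset_span ⟨r, S.cornerMul r c1 c2 hc1 hc2, c1, c2, hc1, hc2, rfl,
    m1, _, m2, _, rfl, rfl, rfl⟩

lemma Xe_mul (u : A1) (v : A2) (a : A) (b1 : A1) (b2 : A2) :
    S.Xe u v (a * ι (b1 ⊗ₜ[k] b2)) = S.Xe (b1 * u) (b2 * v) a := by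
  apply Subtype.ext
  show S.fA * (a * ι (b1 ⊗ₜ[k] b2)) * ι ((u * S.f1) ⊗ₜ[k] (v * S.f2))
      = S.fA * a * ι ((b1 * u * S.f1) ⊗ₜ[k] (b2 * v * S.f2))
  rw [mul_assoc S.fA, mul_assoc a, ← S.hι, Algebra.TensorProduct.tmul_mul_tmul,
    ← mul_assoc b1 u S.f1, ← mul_assoc b2 v S.f2, ← mul_assoc S.fA a]

lemma Xe_expand (u1 : A1) (u2 : A2) (a : A) :
    S.Xe u1 u2 a = ∑ p : Fin S.n1 × Fin S.n2,
      S.cornerMul (S.Xe (S.P p.1) (S.C p.2) a)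
        (S.f1 * (S.Q p.1 * u1) * S.f1) (S.f2 * (S.D p.2 * u2) * S.f2)
        (S.corner_form1 _) (S.corner_form2 _) := by
  apply Subtype.ext
  rw [AddSubmonoidClass.coe_finset_sum]
  show S.fA * a * ι ((u1 * S.f1) ⊗ₜ[k] (u2 * S.f2)) = _
  have hterm : ∀ p : Fin S.n1 × Fin S.n2,
      (S.cornerMul (S.Xe (S.P p.1) (S.C p.2) a)
        (S.f1 * (S.Q p.1 * u1) * S.f1) (S.f2 * (S.D p.2 * u2) * S.f2)
        (S.corner_form1 _) (S.corner_form2 _)).1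
      = S.fA * a * ι ((S.P p.1 * S.f1 * S.Q p.1 * (u1 * S.f1)) ⊗ₜ[k]
          (S.C p.2 * S.f2 * S.D p.2 * (u2 * S.f2))) := by
    intro p
    show (S.fA * a * ι ((S.P p.1 * S.f1) ⊗ₜ[k] (S.C p.2 * S.f2))) *
        ι ((S.f1 * (S.Q p.1 * u1) * S.f1) ⊗ₜ[k] (S.f2 * (S.D p.2 * u2) * S.f2)) = _
    rw [mul_assoc (S.fA * a), ← S.hι, Algebra.TensorProduct.tmul_mul_tmul]
    have e1 : (S.P p.1 * S.f1) * (S.f1 * (S.Q p.1 * u1) * S.f1)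
        = S.P p.1 * S.f1 * S.Q p.1 * (u1 * S.f1) := by
      simp only [← mul_assoc, S.mul_f1_f1]
    have e2 : (S.C p.2 * S.f2) * (S.f2 * (S.D p.2 * u2) * S.f2)
        = S.C p.2 * S.f2 * S.D p.2 * (u2 * S.f2) := by
      simp only [← mul_assoc, S.mul_f2_f2]
    rw [e1, e2]
  rw [Finset.sum_congr rfl fun p _ => hterm p, ← Finset.mul_sum, ← map_sum,
    Fintype.sum_prod_type]
  dsimp only
  simp only [← TensorProduct.tmul_sum]
  rw [← TensorProduct.sum_tmul, ← Finset.sum_mul, ← Finset.sum_mul, S.hs1, S.hs2,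
    one_mul, one_mul]

lemma mk_expand (u1 : A1) (u2 : A2) (a : A)
    (m' : ↥(eFix (k := k) (M := M1) S.f1)) (n' : ↥(eFix (k := k) (M := M2) S.f2)) :
    (Submodule.Quotient.mk (S.Xe u1 u2 a ⊗ₜ[k] (m' ⊗ₜ[k] n')) :
      CornerConvMod (k := k) ι M1 M2 S.f1 S.f2 S.fA) =
    ∑ p : Fin S.n1 × Fin S.n2, Submodule.Quotient.mk
      (S.Xe (S.P p.1) (S.C p.2) a ⊗ₜ[k]
        (S.eF1 (S.f1 * (S.Q p.1 * u1) * S.f1)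
            (corner_one_mul S.hf1 (S.corner_form1 _)) m'.1 ⊗ₜ[k]
         S.eF2 (S.f2 * (S.D p.2 * u2) * S.f2)
            (corner_one_mul S.hf2 (S.corner_form2 _)) n'.1)) := by
  rw [S.Xe_expand u1 u2 a, TensorProduct.sum_tmul, qmk_sum]
  exact Finset.sum_congr rfl fun p _ => S.cornerMul_mk _ _ _ _ _ m' n'

noncomputable def PsiHat : (A ⊗[k] (M1 ⊗[k] M2)) →ₗ[k]
    CornerConvMod (k := k) ι M1 M2 S.f1 S.f2 S.fA :=
  ∑ p : Fin S.n1 × Fin S.n2,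
    (cornerConvRel (k := k) ι M1 M2 S.f1 S.f2 S.fA).mkQ ∘ₗ
      TensorProduct.map (S.Xe (S.P p.1) (S.C p.2))
        (TensorProduct.map (S.U1 (S.Q p.1)) (S.U2 (S.D p.2)))

lemma psiHat_tmul (a : A) (m : M1) (n : M2) :
    S.PsiHat (a ⊗ₜ[k] (m ⊗ₜ[k] n)) = ∑ p : Fin S.n1 × Fin S.n2,
      Submodule.Quotient.mk (S.Xe (S.P p.1) (S.C p.2) a ⊗ₜ[k]
        (S.U1 (S.Q p.1) m ⊗ₜ[k] S.U2 (S.D p.2) n)) := by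
  simp [PsiHat, TensorProduct.map_tmul]

lemma contract (r : ↥(cornerSubmodule (k := k) S.fA)) (w1 : A1) (hw1 : S.f1 * w1 = w1)
    (w2 : A2) (hw2 : S.f2 * w2 = w2) (m : M1) (n : M2) :
    (∑ p : Fin S.n1 × Fin S.n2, Submodule.Quotient.mk
        (r ⊗ₜ[k] (S.eF1 (w1 * (S.P p.1 * S.f1 * S.Q p.1))
              (by rw [← mul_assoc, hw1]) m ⊗ₜ[k]
            S.eF2 (w2 * (S.C p.2 * S.f2 * S.D p.2)) (by rw [← mul_assoc, hw2]) n)) :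
      CornerConvMod (k := k) ι M1 M2 S.f1 S.f2 S.fA) =
    Submodule.Quotient.mk (r ⊗ₜ[k] (S.eF1 w1 hw1 m ⊗ₜ[k] S.eF2 w2 hw2 n)) := by
  have h1 : (∑ i : Fin S.n1, S.eF1 (w1 * (S.P i * S.f1 * S.Q i))
      (by rw [← mul_assoc, hw1]) m) = S.eF1 w1 hw1 m := by
    apply Subtype.ext
    rw [AddSubmonoidClass.coe_finset_sum]
    show (∑ i : Fin S.n1, (w1 * (S.P i * S.f1 * S.Q i)) • m) = w1 • m
    rw [← Finset.sum_smul, ← Finset.mul_sum, S.hs1, mul_one]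
  have h2 : (∑ j : Fin S.n2, S.eF2 (w2 * (S.C j * S.f2 * S.D j))
      (by rw [← mul_assoc, hw2]) n) = S.eF2 w2 hw2 n := by
    apply Subtype.ext
    rw [AddSubmonoidClass.coe_finset_sum]
    show (∑ j : Fin S.n2, (w2 * (S.C j * S.f2 * S.D j)) • n) = w2 • n
    rw [← Finset.sum_smul, ← Finset.mul_sum, S.hs2, mul_one]
  rw [Fintype.sum_prod_type]
  dsimp only
  simp only [← qmk_sum, ← TensorProduct.tmul_sum, ← TensorProduct.sum_tmul]
  rw [← h1, ← h2, TensorProduct.sum_tmul]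
  simp only [TensorProduct.tmul_sum]

lemma psiHat_ker (a : A) (b1 : A1) (b2 : A2) (m : M1) (n : M2) :
    S.PsiHat ((a * ι (b1 ⊗ₜ[k] b2)) ⊗ₜ[k] (m ⊗ₜ[k] n))
      = S.PsiHat (a ⊗ₜ[k] ((b1 • m) ⊗ₜ[k] (b2 • n))) := by
  rw [S.psiHat_tmul, S.psiHat_tmul]
  have step1 : ∀ p : Fin S.n1 × Fin S.n2,
      (Submodule.Quotient.mk (S.Xe (S.P p.1) (S.C p.2) (a * ι (b1 ⊗ₜ[k] b2)) ⊗ₜ[k]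
          (S.U1 (S.Q p.1) m ⊗ₜ[k] S.U2 (S.D p.2) n)) :
        CornerConvMod (k := k) ι M1 M2 S.f1 S.f2 S.fA)
      = ∑ p' : Fin S.n1 × Fin S.n2, Submodule.Quotient.mk
          (S.Xe (S.P p'.1) (S.C p'.2) a ⊗ₜ[k]
            (S.eF1 ((S.f1 * (S.Q p'.1 * b1)) * (S.P p.1 * S.f1 * S.Q p.1))
                (by rw [← mul_assoc, S.hf1']) m ⊗ₜ[k]
             S.eF2 ((S.f2 * (S.D p'.2 * b2)) * (S.C p.2 * S.f2 * S.D p.2))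
                (by rw [← mul_assoc, S.hf2']) n)) := by
    intro p
    rw [S.Xe_mul, S.mk_expand (b1 * S.P p.1) (b2 * S.C p.2) a
      (S.U1 (S.Q p.1) m) (S.U2 (S.D p.2) n)]
    refine Finset.sum_congr rfl fun p' _ => ?_
    have e1 : S.eF1 (S.f1 * (S.Q p'.1 * (b1 * S.P p.1)) * S.f1)
        (corner_one_mul S.hf1 (S.corner_form1 _)) ((S.U1 (S.Q p.1) m : M1))
        = S.eF1 ((S.f1 * (S.Q p'.1 * b1)) * (S.P p.1 * S.f1 * S.Q p.1))
            (by rw [← mul_assoc, S.hf1']) m := by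
      apply Subtype.ext
      show (S.f1 * (S.Q p'.1 * (b1 * S.P p.1)) * S.f1) • ((S.f1 * S.Q p.1) • m) = _
      rw [smul_smul]
      congr 1
      simp only [← mul_assoc, S.mul_f1_f1]
    have e2 : S.eF2 (S.f2 * (S.D p'.2 * (b2 * S.C p.2)) * S.f2)
        (corner_one_mul S.hf2 (S.corner_form2 _)) ((S.U2 (S.D p.2) n : M2))
        = S.eF2 ((S.f2 * (S.D p'.2 * b2)) * (S.C p.2 * S.f2 * S.D p.2))
            (by rw [← mul_assoc, S.hf2']) n := by
      apply Subtype.ext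
      show (S.f2 * (S.D p'.2 * (b2 * S.C p.2)) * S.f2) • ((S.f2 * S.D p.2) • n) = _
      rw [smul_smul]
      congr 1
      simp only [← mul_assoc, S.mul_f2_f2]
    rw [e1, e2]
  rw [Finset.sum_congr rfl fun p _ => step1 p, Finset.sum_comm]
  refine Finset.sum_congr rfl fun p' _ => ?_
  refine (S.contract (S.Xe (S.P p'.1) (S.C p'.2) a) (S.f1 * (S.Q p'.1 * b1))
    (S.hf1' _) (S.f2 * (S.D p'.2 * b2)) (S.hf2' _) m n).trans ?_
  have e1 : S.eF1 (S.f1 * (S.Q p'.1 * b1)) (S.hf1' _) m = S.U1 (S.Q p'.1) (b1 • m) := by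
    apply Subtype.ext
    show (S.f1 * (S.Q p'.1 * b1)) • m = (S.f1 * S.Q p'.1) • (b1 • m)
    rw [smul_smul, ← mul_assoc]
  have e2 : S.eF2 (S.f2 * (S.D p'.2 * b2)) (S.hf2' _) n = S.U2 (S.D p'.2) (b2 • n) := by
    apply Subtype.ext
    show (S.f2 * (S.D p'.2 * b2)) • n = (S.f2 * S.D p'.2) • (b2 • n)
    rw [smul_smul, ← mul_assoc]
  rw [e1, e2]

lemma convSmul_mk' (x a : A) (m : M1) (n : M2) :
    convSmul (k := k) ι M1 M2 x (Submodule.Quotient.mk (a ⊗ₜ[k] (m ⊗ₜ[k] n)))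
      = Submodule.Quotient.mk ((x * a) ⊗ₜ[k] (m ⊗ₜ[k] n)) := by
  rw [convSmul, Submodule.mapQ_apply]; rfl

lemma cornerConvSmul_mk' (r y : ↥(cornerSubmodule (k := k) S.fA))
    (w1 : ↥(eFix (k := k) (M := M1) S.f1)) (w2 : ↥(eFix (k := k) (M := M2) S.f2)) :
    cornerConvSmul (k := k) ι M1 M2 S.f1 S.f2 S.fA S.hfA r
        (Submodule.Quotient.mk (y ⊗ₜ[k] (w1 ⊗ₜ[k] w2)))
      = Submodule.Quotient.mk
          (cornerLmul (k := k) S.fA S.hfA r y ⊗ₜ[k] (w1 ⊗ₜ[k] w2)) := by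
  rw [cornerConvSmul, Submodule.mapQ_apply]; rfl

noncomputable def PhiHat : (↥(cornerSubmodule (k := k) S.fA) ⊗[k]
      (↥(eFix (k := k) (M := M1) S.f1) ⊗[k] ↥(eFix (k := k) (M := M2) S.f2)))
    →ₗ[k] ConvMod (k := k) ι M1 M2 :=
  (convRel (k := k) ι M1 M2).mkQ ∘ₗ
    TensorProduct.map (cornerSubmodule (k := k) S.fA).subtype
      (TensorProduct.map (eFix (k := k) (M := M1) S.f1).subtype
        (eFix (k := k) (M := M2) S.f2).subtype)

lemma PhiHat_tmul (r : ↥(cornerSubmodule (k := k) S.fA))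
    (m1 : ↥(eFix (k := k) (M := M1) S.f1)) (m2 : ↥(eFix (k := k) (M := M2) S.f2)) :
    S.PhiHat (r ⊗ₜ[k] (m1 ⊗ₜ[k] m2))
      = Submodule.Quotient.mk (r.1 ⊗ₜ[k] (m1.1 ⊗ₜ[k] m2.1)) := by
  simp [PhiHat, TensorProduct.map_tmul]

noncomputable def Phi :
    CornerConvMod (k := k) ι M1 M2 S.f1 S.f2 S.fA →ₗ[k] ConvMod (k := k) ι M1 M2 :=
  Submodule.liftQ _ (S.PhiHat (M1 := M1) (M2 := M2)) (by
    rw [cornerConvRel, Submodule.span_le]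
    rintro _ ⟨r, ru, c1, c2, hc1, hc2, hru, m1, m1', m2, m2', hm1, hm2, rfl⟩
    simp only [SetLike.mem_coe, LinearMap.mem_ker, map_sub]
    rw [S.PhiHat_tmul, S.PhiHat_tmul, hru, hm1, hm2, conv_mk, sub_self])

lemma Phi_mk (t : ↥(cornerSubmodule (k := k) S.fA) ⊗[k]
    (↥(eFix (k := k) (M := M1) S.f1) ⊗[k] ↥(eFix (k := k) (M := M2) S.f2))) : S.Phi (Submodule.Quotient.mk t) = S.PhiHat t :=
  Submodule.liftQ_apply _ _ _

noncomputable def PsiBar :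
    ConvMod (k := k) ι M1 M2 →ₗ[k] CornerConvMod (k := k) ι M1 M2 S.f1 S.f2 S.fA :=
  Submodule.liftQ _ (S.PsiHat (M1 := M1) (M2 := M2)) (by
    rw [convRel, Submodule.span_le]
    rintro _ ⟨a, b1, b2, m, n, rfl⟩
    simp only [SetLike.mem_coe, LinearMap.mem_ker, map_sub]
    rw [S.psiHat_ker, sub_self])

lemma PsiBar_mk (t : A ⊗[k] (M1 ⊗[k] M2)) : S.PsiBar (Submodule.Quotient.mk t) = S.PsiHat t :=
  Submodule.liftQ_apply _ _ _

lemma Phi_PsiBar : S.Phi ∘ₗ S.PsiBar = convSmul (k := k) ι M1 M2 S.fA := by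
  refine Submodule.linearMap_qext _ (ext3 fun a m n => ?_)
  simp only [LinearMap.comp_apply, Submodule.mkQ_apply]
  rw [S.PsiBar_mk, S.psiHat_tmul, map_sum, convSmul_mk']
  have hterm : ∀ p : Fin S.n1 × Fin S.n2,
      S.Phi (Submodule.Quotient.mk (S.Xe (S.P p.1) (S.C p.2) a ⊗ₜ[k]
        (S.U1 (S.Q p.1) m ⊗ₜ[k] S.U2 (S.D p.2) n)))
      = Submodule.Quotient.mk ((S.fA * a * ι ((S.P p.1 * S.f1 * S.Q p.1) ⊗ₜ[k]
          (S.C p.2 * S.f2 * S.D p.2))) ⊗ₜ[k] (m ⊗ₜ[k] n)) := by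
    intro p
    rw [S.Phi_mk, S.PhiHat_tmul]
    show (Submodule.Quotient.mk ((S.fA * a * ι ((S.P p.1 * S.f1) ⊗ₜ[k] (S.C p.2 * S.f2)))
        ⊗ₜ[k] (((S.f1 * S.Q p.1) • m) ⊗ₜ[k] ((S.f2 * S.D p.2) • n))) :
      ConvMod (k := k) ι M1 M2) = _
    rw [← conv_mk]
    have e : (S.fA * a * ι ((S.P p.1 * S.f1) ⊗ₜ[k] (S.C p.2 * S.f2))) *
        ι ((S.f1 * S.Q p.1) ⊗ₜ[k] (S.f2 * S.D p.2))
        = S.fA * a * ι ((S.P p.1 * S.f1 * S.Q p.1) ⊗ₜ[k] (S.C p.2 * S.f2 * S.D p.2)) := by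
      rw [mul_assoc (S.fA * a), ← S.hι, Algebra.TensorProduct.tmul_mul_tmul]
      have e1 : (S.P p.1 * S.f1) * (S.f1 * S.Q p.1) = S.P p.1 * S.f1 * S.Q p.1 := by
        simp only [← mul_assoc, S.mul_f1_f1]
      have e2 : (S.C p.2 * S.f2) * (S.f2 * S.D p.2) = S.C p.2 * S.f2 * S.D p.2 := by
        simp only [← mul_assoc, S.mul_f2_f2]
      rw [e1, e2]
    rw [e]
  rw [Finset.sum_congr rfl fun p _ => hterm p, ← qmk_sum, ← TensorProduct.sum_tmul,
    ← Finset.mul_sum, ← map_sum, Fintype.sum_prod_type]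
  dsimp only
  simp only [← TensorProduct.tmul_sum]
  rw [← TensorProduct.sum_tmul, S.hs1, S.hs2, conv_mk, one_smul, one_smul]

lemma PsiBar_Phi : (S.PsiBar (M1 := M1) (M2 := M2)) ∘ₗ S.Phi = LinearMap.id := by
  refine Submodule.linearMap_qext _ (ext3 fun r m1 m2 => ?_)
  simp only [LinearMap.comp_apply, Submodule.mkQ_apply, LinearMap.id_apply]
  rw [S.Phi_mk, S.PhiHat_tmul]
  have h0 : (Submodule.Quotient.mk (r.1 ⊗ₜ[k] (m1.1 ⊗ₜ[k] m2.1)) :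
      ConvMod (k := k) ι M1 M2)
      = Submodule.Quotient.mk ((r.1 * ι (S.f1 ⊗ₜ[k] S.f2)) ⊗ₜ[k] (m1.1 ⊗ₜ[k] m2.1)) := by
    rw [conv_mk, show S.f1 • m1.1 = m1.1 from m1.2, show S.f2 • m2.1 = m2.1 from m2.2]
  rw [h0, S.PsiBar_mk, S.psiHat_tmul]
  have step : ∀ p : Fin S.n1 × Fin S.n2,
      (Submodule.Quotient.mk (S.Xe (S.P p.1) (S.C p.2) (r.1 * ι (S.f1 ⊗ₜ[k] S.f2)) ⊗ₜ[k]
          (S.U1 (S.Q p.1) m1.1 ⊗ₜ[k] S.U2 (S.D p.2) m2.1)) :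
        CornerConvMod (k := k) ι M1 M2 S.f1 S.f2 S.fA)
      = Submodule.Quotient.mk (r ⊗ₜ[k]
          (S.eF1 (S.f1 * (S.P p.1 * S.f1 * S.Q p.1)) (S.hf1' _) m1.1 ⊗ₜ[k]
           S.eF2 (S.f2 * (S.C p.2 * S.f2 * S.D p.2)) (S.hf2' _) m2.1)) := by
    intro p
    rw [S.Xe_mul]
    have hXc : S.Xe (S.f1 * S.P p.1) (S.f2 * S.C p.2) r.1
        = S.cornerMul r (S.f1 * S.P p.1 * S.f1) (S.f2 * S.C p.2 * S.f2)
            (S.corner_form1 _) (S.corner_form2 _) := by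
      apply Subtype.ext
      show S.fA * r.1 * ι ((S.f1 * S.P p.1 * S.f1) ⊗ₜ[k] (S.f2 * S.C p.2 * S.f2))
          = r.1 * ι ((S.f1 * S.P p.1 * S.f1) ⊗ₜ[k] (S.f2 * S.C p.2 * S.f2))
      rw [corner_one_mul S.hfA r.2]
    rw [hXc, S.cornerMul_mk]
    have e1 : S.eF1 (S.f1 * S.P p.1 * S.f1)
        (corner_one_mul S.hf1 (S.corner_form1 _)) ((S.U1 (S.Q p.1) m1.1 : M1))
        = S.eF1 (S.f1 * (S.P p.1 * S.f1 * S.Q p.1)) (S.hf1' _) m1.1 := by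
      apply Subtype.ext
      show (S.f1 * S.P p.1 * S.f1) • ((S.f1 * S.Q p.1) • m1.1) = _
      rw [smul_smul]
      congr 1
      simp only [← mul_assoc, S.mul_f1_f1]
    have e2 : S.eF2 (S.f2 * S.C p.2 * S.f2)
        (corner_one_mul S.hf2 (S.corner_form2 _)) ((S.U2 (S.D p.2) m2.1 : M2))
        = S.eF2 (S.f2 * (S.C p.2 * S.f2 * S.D p.2)) (S.hf2' _) m2.1 := by
      apply Subtype.ext
      show (S.f2 * S.C p.2 * S.f2) • ((S.f2 * S.D p.2) • m2.1) = _
      rw [smul_smul]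
      congr 1
      simp only [← mul_assoc, S.mul_f2_f2]
    rw [e1, e2]
  rw [Finset.sum_congr rfl fun p _ => step p]
  refine (S.contract r S.f1 S.hf1 S.f2 S.hf2 m1.1 m2.1).trans ?_
  rw [show S.eF1 S.f1 S.hf1 m1.1 = m1 from Subtype.ext m1.2,
    show S.eF2 S.f2 S.hf2 m2.1 = m2 from Subtype.ext m2.2]

lemma convSmul_Phi : convSmul (k := k) ι M1 M2 S.fA ∘ₗ S.Phi = S.Phi := by
  refine Submodule.linearMap_qext _ (ext3 fun r m1 m2 => ?_)
  simp only [LinearMap.comp_apply, Submodule.mkQ_apply]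
  rw [S.Phi_mk, S.PhiHat_tmul, convSmul_mk', corner_one_mul S.hfA r.2]

lemma PsiBar_equiv (r : ↥(cornerSubmodule (k := k) S.fA)) :
    S.PsiBar ∘ₗ convSmul (k := k) ι M1 M2 r.1
      = cornerConvSmul (k := k) ι M1 M2 S.f1 S.f2 S.fA S.hfA r ∘ₗ S.PsiBar := by
  refine Submodule.linearMap_qext _ (ext3 fun a m n => ?_)
  simp only [LinearMap.comp_apply, Submodule.mkQ_apply]
  rw [convSmul_mk', S.PsiBar_mk, S.PsiBar_mk, S.psiHat_tmul, S.psiHat_tmul, map_sum]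
  refine Finset.sum_congr rfl fun p _ => ?_
  rw [S.cornerConvSmul_mk']
  have e : S.Xe (S.P p.1) (S.C p.2) (r.1 * a)
      = cornerLmul (k := k) S.fA S.hfA r (S.Xe (S.P p.1) (S.C p.2) a) := by
    apply Subtype.ext
    show S.fA * (r.1 * a) * ι ((S.P p.1 * S.f1) ⊗ₜ[k] (S.C p.2 * S.f2))
        = r.1 * (S.fA * a * ι ((S.P p.1 * S.f1) ⊗ₜ[k] (S.C p.2 * S.f2)))
    rw [← mul_assoc, corner_one_mul S.hfA r.2, ← mul_assoc, ← mul_assoc,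
      corner_mul_one S.hfA r.2]
  rw [e]

end MData

end InnerAux

/-- **(The Morita equivalence `F` is monoidal.)** Let `RC_β` be symmetric quiver
Hecke–Clifford superalgebras with full even idempotents `e†(β)`, and let
`F_β = e†(β).(−) : RC_β-sgMod → R_β-sgMod` be the Morita equivalence onto modules over
the corresponding quiver Hecke algebra.  For modules `M₁, M₂` over
`RC_{β₁}, RC_{β₂}` there is a natural isomorphism
`F_{β₁+β₂}(M₁ ∘ M₂) ≅ F_{β₁}(M₁) ∘ F_{β₂}(M₂)`; equivalently, `F = ⊕ F_β` is a
monoidal functor. -/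
theorem morita_monoidal
    -- the embedding `RC_{β₁} ⊗ RC_{β₂} ≅ e(β₁,β₂) RC_{β₁+β₂} e(β₁,β₂)`
    (hι : ∀ x y : A1 ⊗[k] A2, ι (x * y) = ι x * ι y)
    (e12 : A) (he12 : ι 1 = e12)
    -- the idempotents `e†(β₁)`, `e†(β₂)`, `e†(β₁+β₂)`
    (f1 : A1) (hf1 : f1 * f1 = f1)
    (f2 : A2) (hf2 : f2 * f2 = f2)
    (fA : A) (hfA : fA * fA = fA)
    -- compatibility: `e†(β₁+β₂)·e(β₁,β₂) = e(β₁,β₂)·e†(β₁+β₂) = e†(β₁,β₂)`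
    (hdag1 : fA * e12 = ι (f1 ⊗ₜ[k] f2))
    (hdag2 : e12 * fA = ι (f1 ⊗ₜ[k] f2))
    -- fullness of the idempotents
    (hfull1 : Submodule.span k {x : A1 | ∃ a b : A1, x = a * f1 * b} = ⊤)
    (hfull2 : Submodule.span k {x : A2 | ∃ a b : A2, x = a * f2 * b} = ⊤)
    (hfullA : Submodule.span k {x : A | ∃ a b : A, x = a * fA * b} = ⊤) :
    ∃ F : ↥(eConv (k := k) ι M1 M2 fA) ≃ₗ[k]
        CornerConvMod (k := k) ι M1 M2 f1 f2 fA,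
      -- `F` is equivariant for the actions of the corner ring `R_{β₁+β₂}`
      ∀ (r : ↥(cornerSubmodule (k := k) fA))
        (v v' : ↥(eConv (k := k) ι M1 M2 fA)),
        v'.1 = convSmul (k := k) ι M1 M2 r.1 v.1 →
        F v' = cornerConvSmul (k := k) ι M1 M2 f1 f2 fA hfA r (F v) := by
  have hg : ι (f1 ⊗ₜ[k] f2) * fA = ι (f1 ⊗ₜ[k] f2) := by
    rw [← hdag1, mul_assoc, hdag2, ← hdag1, ← mul_assoc, hfA]
  obtain ⟨n1, P, Q, hs1⟩ := full_decomp (k := k) hfull1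
  obtain ⟨n2, C, D, hs2⟩ := full_decomp (k := k) hfull2
  let S : MData (ι := ι) := ⟨f1, f2, fA, hι, hf1, hf2, hfA, hg, n1, n2, P, Q, C, D, hs1, hs2⟩
  have hmem : ∀ x, S.Phi (M1 := M1) (M2 := M2) x ∈ eConv (k := k) ι M1 M2 fA := by
    intro x
    show convSmul (k := k) ι M1 M2 fA (S.Phi x) = S.Phi x
    exact DFunLike.congr_fun S.convSmul_Phi x
  refine ⟨LinearEquiv.ofLinear
      ((S.PsiBar (M1 := M1) (M2 := M2)) ∘ₗ (eConv (k := k) ι M1 M2 fA).subtype)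
      (LinearMap.codRestrict _ (S.Phi (M1 := M1) (M2 := M2)) hmem) ?_ ?_, ?_⟩
  · refine LinearMap.ext fun x => ?_
    simp only [LinearMap.comp_apply, Submodule.subtype_apply,
      LinearMap.codRestrict_apply, LinearMap.id_apply]
    exact DFunLike.congr_fun S.PsiBar_Phi x
  · refine LinearMap.ext fun v => Subtype.ext ?_
    simp only [LinearMap.comp_apply, Submodule.subtype_apply,
      LinearMap.codRestrict_apply, LinearMap.id_apply]
    exact (DFunLike.congr_fun S.Phi_PsiBar v.1).trans v.2
  · intro r v v' hv
    rw [LinearEquiv.ofLinear_apply, LinearEquiv.ofLinear_apply]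
    simp only [LinearMap.comp_apply, Submodule.subtype_apply]
    rw [hv]
    exact DFunLike.congr_fun (S.PsiBar_equiv r) v.1

end
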